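/- Let X be a nonempty set, k a field of characteristic 0, N : X × X → ℕ, and M ∈ ℕ with N(a,b) ≤ M for all a,b ∈ X. Then for all x,y ∈ X, all l ≥ 1, and all n,m ∈ ℤ, the polynomial d^l( f^{0,0}_{x,y}(n,m; 3M) ) belongs to the ideal I(N). -/
import Mathlib


noncomputable section

/-- The polynomial algebra `F = k[B^(ω)]` in the variables `a^(p)(n)`
(`a ∈ X`, `p ∈ ℕ`, `n ∈ ℤ`), encoded as triples `(a, p, n)`. -/
abbrev FreeDiffAlg (k X : Type*) [CommRing k] : Type _ :=
  MvPolynomial (X × ℕ × ℤ) k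

/-- The derivation `d : F → F` determined by `d(a^(p)(n)) = a^(p+1)(n)`. -/
def derD (k X : Type*) [CommRing k] :
    Derivation k (FreeDiffAlg k X) (FreeDiffAlg k X) :=
  MvPolynomial.mkDerivation k fun v : X × ℕ × ℤ =>
    MvPolynomial.X (v.1, v.2.1 + 1, v.2.2)

/-- The weight of the variable `a^(p)(n)` is `p - 1`. -/
def wtVar {X : Type*} (v : X × ℕ × ℤ) : ℤ := (v.2.1 : ℤ) - 1

/-- `F_w`: the `k`-span of the monomials of weight `w` (the weight of a monomial
is the sum of the weights of its variables, counted with multiplicity). -/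
def Fwt (k X : Type*) [CommRing k] (w : ℤ) : Submodule k (FreeDiffAlg k X) :=
  MvPolynomial.weightedHomogeneousSubmodule k (wtVar (X := X)) w

/-- The weight of a monomial (given by its exponent function). -/
def wtMon {X : Type*} (s : (X × ℕ × ℤ) →₀ ℕ) : ℤ :=
  s.sum fun v c => (c : ℤ) * wtVar v

/-- `f^{p,q}_{a,b}(n, m; L) = Σ_{t=0}^{L} (−1)^t C(L,t) a^(p)(n−t) b^(q)(m+t)`. -/
def fpq (k : Type*) {X : Type*} [CommRing k] (a b : X) (p q : ℕ)
    (n m : ℤ) (L : ℕ) : FreeDiffAlg k X :=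
  ∑ t ∈ Finset.range (L + 1),
    ((-1 : k) ^ t * (L.choose t : k)) •
      (MvPolynomial.X (a, p, n - (t : ℤ)) * MvPolynomial.X (b, q, m + (t : ℤ)))

/-- The ideal `I(N)` generated by all `d^l(f_{a,b}(n,m))`,
where `f_{a,b}(n,m) = f^{1,0}_{a,b}(n, m; N(a,b))`. -/
def idealI (k : Type*) {X : Type*} [CommRing k] (N : X × X → ℕ) :
    Ideal (FreeDiffAlg k X) :=
  Ideal.span { g | ∃ (a b : X) (n m : ℤ) (l : ℕ),
    g = (⇑(derD k X))^[l] (fpq k a b 1 0 n m (N (a, b))) }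

/-- The ideal `K(N̄)` generated by all `d^l(f^{p,q}_{a,b}(n, m; N̄((a,p),(b,q))))`. -/
def idealK (k : Type*) {X : Type*} [CommRing k]
    (Nbar : (X × ℕ) × (X × ℕ) → ℕ) : Ideal (FreeDiffAlg k X) :=
  Ideal.span { g | ∃ (a b : X) (p q l : ℕ) (n m : ℤ),
    g = (⇑(derD k X))^[l] (fpq k a b p q n m (Nbar ((a, p), (b, q)))) }

section AuxLemmas
variable {k X : Type*} [CommRing k]

lemma derD_X (v : X × ℕ × ℤ) :
    derD k X (MvPolynomial.X v) = MvPolynomial.X (v.1, v.2.1 + 1, v.2.2) := by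
  unfold derD
  exact MvPolynomial.mkDerivation_X (R := k)
    (fun v : X × ℕ × ℤ => (MvPolynomial.X (v.1, v.2.1 + 1, v.2.2) : FreeDiffAlg k X)) v

/-- recursion -/
lemma fpq_succ (a b : X) (p q : ℕ) (n m : ℤ) (L : ℕ) :
    fpq k a b p q n m (L + 1) =
      fpq k a b p q n m L - fpq k a b p q (n - 1) (m + 1) L := by
  unfold fpq
  rw [Finset.sum_range_succ']
  push_cast
  have h1 : ∀ t ∈ Finset.range (L + 1),
      (((-1 : k) ^ (t+1) * (((L+1).choose (t+1) : k))) •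
        (MvPolynomial.X (a, p, n - ((t:ℤ)+1)) * MvPolynomial.X (b, q, m + ((t:ℤ)+1)))
        : FreeDiffAlg k X) =
      ((-1 : k) ^ (t+1) * ((L.choose (t+1) : k))) •
        (MvPolynomial.X (a, p, n - ((t:ℤ)+1)) * MvPolynomial.X (b, q, m + ((t:ℤ)+1)))
      + (-((-1 : k) ^ t * ((L.choose t : k)))) •
        (MvPolynomial.X (a, p, (n-1) - (t:ℤ)) * MvPolynomial.X (b, q, (m+1) + (t:ℤ))) := by
    intro t _
    have hc : ((L+1).choose (t+1) : k) = (L.choose (t+1) : k) + (L.choose t : k) := by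
      rw [Nat.choose_succ_succ]; push_cast; ring
    have h2 : (n - 1) - (t:ℤ) = n - ((t:ℤ)+1) := by ring
    have h3 : (m + 1) + (t:ℤ) = m + ((t:ℤ)+1) := by ring
    rw [h2, h3, hc, ← add_smul]
    congr 1
    ring
  rw [Finset.sum_congr rfl h1, Finset.sum_add_distrib]
  conv_rhs => rw [Finset.sum_range_succ']
  conv_lhs => rw [Finset.sum_range_succ]
  simp only [Nat.choose_succ_self, Nat.cast_zero, mul_zero, zero_smul, add_zero,
    neg_smul, Finset.sum_neg_distrib, Nat.choose_zero_right, Nat.cast_one, pow_zero,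
    one_mul, Nat.cast_zero, sub_zero, add_zero, one_smul]
  push_cast
  abel



lemma derD_fpq (a b : X) (p q : ℕ) (n m : ℤ) (L : ℕ) :
    derD k X (fpq k a b p q n m L) =
      fpq k a b (p+1) q n m L + fpq k a b p (q+1) n m L := by
  unfold fpq
  rw [map_sum, ← Finset.sum_add_distrib]
  refine Finset.sum_congr rfl fun t _ => ?_
  rw [Derivation.map_smul, Derivation.leibniz, derD_X, derD_X, ← smul_add]
  congr 1
  simp only [smul_eq_mul]
  ring

lemma fpq_swap (a b : X) (p q : ℕ) (n m : ℤ) (L : ℕ) :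
    fpq k a b p q n m L =
      ((-1 : k) ^ L) • fpq k b a q p (m + (L:ℤ)) (n - (L:ℤ)) L := by
  unfold fpq
  rw [Finset.smul_sum]
  rw [← Finset.sum_range_reflect]
  refine Finset.sum_congr rfl fun t ht => ?_
  rw [Finset.mem_range] at ht
  have h1 : L + 1 - 1 - t = L - t := by omega
  rw [h1, smul_smul]
  have hle : t ≤ L := by omega
  have hp : ((-1:k))^(L-t) = (-1:k)^L * (-1)^t := by
    have h : (-1:k)^L * (-1)^t = (-1)^(L+t) := (pow_add _ _ _).symm
    rw [h, show L+t = (L-t)+2*t by omega, pow_add, pow_mul]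
    simp
  rw [Nat.choose_symm hle, hp]
  push_cast [Nat.cast_sub hle]
  have harg1 : n - ((L:ℤ) - t) = (n - L) + t := by ring
  have harg2 : m + ((L:ℤ) - t) = (m + L) - t := by ring
  rw [harg1, harg2]
  simp only [MvPolynomial.smul_eq_C_mul, map_mul, map_pow, map_neg, map_one, map_natCast]
  ring



lemma fpq_mem_idealI (N : X × X → ℕ) (a b : X) (L : ℕ) (hL : N (a, b) ≤ L) :
    ∀ n m : ℤ, fpq k a b 1 0 n m L ∈ idealI k N := by
  induction L, hL using Nat.le_induction with
  | base =>
    intro n m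
    exact Ideal.subset_span ⟨a, b, n, m, 0, rfl⟩
  | succ L hL ih =>
    intro n m
    rw [fpq_succ]
    exact sub_mem (ih n m) (ih (n - 1) (m + 1))

lemma derD_mem_idealI (N : X × X → ℕ) {g : FreeDiffAlg k X}
    (hg : g ∈ idealI k N) : derD k X g ∈ idealI k N := by
  have h : ∀ g ∈ idealI k N, g ∈ idealI k N ∧ derD k X g ∈ idealI k N := by
    intro g hg
    refine Submodule.span_induction ?_ ?_ ?_ ?_ hg
    · rintro g ⟨a, b, n, m, l, rfl⟩
      refine ⟨Ideal.subset_span ⟨a, b, n, m, l, rfl⟩, ?_⟩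
      exact Ideal.subset_span ⟨a, b, n, m, l + 1,
        (Function.iterate_succ_apply' _ _ _).symm⟩
    · exact ⟨zero_mem _, by simp [zero_mem]⟩
    · rintro x y _ _ ⟨hx, hdx⟩ ⟨hy, hdy⟩
      exact ⟨add_mem hx hy, by rw [map_add]; exact add_mem hdx hdy⟩
    · rintro c x _ ⟨hx, hdx⟩
      refine ⟨Submodule.smul_mem _ c hx, ?_⟩
      rw [smul_eq_mul, Derivation.leibniz, smul_eq_mul, smul_eq_mul]
      exact add_mem (Ideal.mul_mem_left _ _ hdx) (Ideal.mul_mem_right _ _ hx)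
  exact (h g hg).2

lemma iterate_derD_mem_idealI (N : X × X → ℕ) {g : FreeDiffAlg k X}
    (hg : g ∈ idealI k N) (l : ℕ) : (⇑(derD k X))^[l] g ∈ idealI k N := by
  induction l with
  | zero => exact hg
  | succ l ih => rw [Function.iterate_succ_apply']; exact derD_mem_idealI N ih


end AuxLemmas

/-- `d^l(f^{0,0}_{x,y}(n, m; 3M)) ∈ I(N)` for `l ≥ 1`. -/
theorem iterate_derD_fpq_zero_zero_mem_idealI
    (k X : Type*) [Field k] [CharZero k] [Nonempty X]
    (N : X × X → ℕ) (M : ℕ) (hM : ∀ a b : X, N (a, b) ≤ M)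
    (x y : X) (l : ℕ) (hl : 1 ≤ l) (n m : ℤ) :
    (⇑(derD k X))^[l] (fpq k x y 0 0 n m (3 * M)) ∈ idealI k N := by
  obtain ⟨l', rfl⟩ : ∃ l', l = l' + 1 := ⟨l - 1, by omega⟩
  rw [Function.iterate_succ_apply]
  apply iterate_derD_mem_idealI
  rw [derD_fpq]
  refine add_mem ?_ ?_
  · exact fpq_mem_idealI N x y (3 * M) (by have := hM x y; omega) n m
  · have hsw := fpq_swap (k := k) (X := X) x y 0 1 n m (3 * M)
    rw [hsw, MvPolynomial.smul_eq_C_mul]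
    exact Ideal.mul_mem_left _ _
      (fpq_mem_idealI N y x (3 * M) (by have := hM y x; omega) _ _)
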